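/- Let a be a nonzero real number and x, y, z real numbers, and set A = (x + i·y)/√2, B = (z - i·a)/√2, C = -(x - i·y)/√2 as complex numbers. Then B² - A·C = (x² + y² + (z - i·a)²)/2, and B² - A·C = 0 if and only if z = 0 and x² + y² = a². (The singularity of the linearized Kerr field is a ring.) -/

import Mathlib

theorem kerr_discriminant (a x y z : ℝ) (ha : a ≠ 0) :
    ((((z : ℂ) - Complex.I * (a : ℂ)) / (Real.sqrt 2 : ℂ))^2
        - (((x : ℂ) + Complex.I * (y : ℂ)) / (Real.sqrt 2 : ℂ))
          * (-(((x : ℂ) - Complex.I * (y : ℂ)) / (Real.sqrt 2 : ℂ)))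
      = ((x : ℂ)^2 + (y : ℂ)^2 + ((z : ℂ) - Complex.I * (a : ℂ))^2) / 2) ∧
    (((((z : ℂ) - Complex.I * (a : ℂ)) / (Real.sqrt 2 : ℂ))^2
        - (((x : ℂ) + Complex.I * (y : ℂ)) / (Real.sqrt 2 : ℂ))
          * (-(((x : ℂ) - Complex.I * (y : ℂ)) / (Real.sqrt 2 : ℂ))) = 0) ↔
      z = 0 ∧ x^2 + y^2 = a^2) := by
  have h2 : ((Real.sqrt 2 : ℝ) : ℂ)^2 = 2 := by
    norm_cast
    rw [Real.sq_sqrt] <;> norm_num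
  have hs : ((Real.sqrt 2 : ℝ) : ℂ) ≠ 0 := by
    intro h
    rw [h] at h2
    norm_num at h2
  have key : (((z : ℂ) - Complex.I * (a : ℂ)) / (Real.sqrt 2 : ℂ))^2
        - (((x : ℂ) + Complex.I * (y : ℂ)) / (Real.sqrt 2 : ℂ))
          * (-(((x : ℂ) - Complex.I * (y : ℂ)) / (Real.sqrt 2 : ℂ)))
      = ((x : ℂ)^2 + (y : ℂ)^2 + ((z : ℂ) - Complex.I * (a : ℂ))^2) / 2 := by
    rw [div_pow, h2, mul_neg, div_mul_div_comm, ← sq, h2, sub_neg_eq_add]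
    linear_combination (-(y:ℂ)^2/2) * Complex.I_sq
  refine ⟨key, ?_⟩
  rw [key]
  constructor
  · intro h
    have h0 : (x : ℂ)^2 + (y : ℂ)^2 + ((z : ℂ) - Complex.I * (a : ℂ))^2 = 0 := by
      field_simp at h; rw [mul_zero] at h; exact h
    have hre := congrArg Complex.re h0
    have him := congrArg Complex.im h0
    simp [Complex.add_re, Complex.add_im, Complex.sub_re, Complex.sub_im, pow_two,
      Complex.mul_re, Complex.mul_im] at hre him
    have hz : z = 0 := by
      rcases mul_eq_zero.mp (by linarith : z * a = 0) with h | h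
      · exact h
      · exact absurd h ha
    subst hz
    constructor
    · rfl
    · nlinarith [hre]
  · rintro ⟨hz, hxy⟩
    subst hz
    have : (x:ℂ)^2 + (y:ℂ)^2 = (a:ℂ)^2 := by exact_mod_cast congrArg (fun t : ℝ => (t:ℂ)) hxy
    rw [div_eq_zero_iff]
    left
    push_cast
    rw [this]
    rw [zero_sub, neg_pow, mul_pow, Complex.I_sq]
    ring
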